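/- arXiv:2504.04067 — 2 statements merged into one kernel-verified Lean document; each statement's English description precedes it below -/
import Mathlib

section
/- For any Hermitian matrix M and any positive semidefinite matrix σ with unit trace such that the support of M is contained in the support of σ, the trace norm of M is at most the Frobenius norm of σ^{-1/4} M σ^{-1/4} (where the inverse is the Moore–Penrose pseudoinverse). -/
open scoped BigOperators ComplexOrder

/-- Apply a real function to a Hermitian matrix via its spectral decomposition
(zero if the matrix is not Hermitian). -/
noncomputable def matFun {n : Type*} [Fintype n] [DecidableEq n]
    (A : Matrix n n ℂ) (f : ℝ → ℝ) : Matrix n n ℂ :=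
  if h : A.IsHermitian then h.cfc f else 0

/-- Moore–Penrose pseudoinverse power of a Hermitian matrix: eigenvalue `0` is sent to `0`,
nonzero eigenvalues `t` to `t ^ r`. -/
noncomputable def pinvPow {n : Type*} [Fintype n] [DecidableEq n]
    (A : Matrix n n ℂ) (r : ℝ) : Matrix n n ℂ :=
  matFun A (fun t => if t = 0 then 0 else Real.rpow t r)

/-- Matrix logarithm (base 2) on the support of a Hermitian matrix. -/
noncomputable def matLog2 {n : Type*} [Fintype n] [DecidableEq n]
    (A : Matrix n n ℂ) : Matrix n n ℂ :=
  matFun A (fun t => if t = 0 then 0 else Real.logb 2 t)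

/-- Schatten 1-norm (trace norm) of a complex matrix: the trace of `√(Aᴴ A)`. -/
noncomputable def traceNorm {n : Type*} [Fintype n] [DecidableEq n]
    (A : Matrix n n ℂ) : ℝ :=
  (((Matrix.posSemidef_conjTranspose_mul_self A).1.eigenvectorUnitary.1 *
      Matrix.diagonal ((fun x : ℝ => (x : ℂ)) ∘ (√·) ∘ (Matrix.posSemidef_conjTranspose_mul_self A).1.eigenvalues) *
      (star (Matrix.posSemidef_conjTranspose_mul_self A).1.eigenvectorUnitary : Matrix n n ℂ)).trace).re

/-- Schatten 2-norm (Frobenius norm) of a complex matrix. -/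
noncomputable def frobNorm {n : Type*} [Fintype n] [DecidableEq n]
    (A : Matrix n n ℂ) : ℝ :=
  Real.sqrt (((A.conjTranspose * A).trace).re)

/-- Squared Frobenius norm. -/
noncomputable def frobSq {n : Type*} [Fintype n] [DecidableEq n]
    (A : Matrix n n ℂ) : ℝ :=
  ((A.conjTranspose * A).trace).re

/-- Schatten ∞-norm (operator norm): square root of the largest eigenvalue of `Aᴴ A`. -/
noncomputable def matOpNorm {n : Type*} [Fintype n] [DecidableEq n]
    (A : Matrix n n ℂ) : ℝ :=
  Real.sqrt (⨆ i, (Matrix.posSemidef_conjTranspose_mul_self A).1.eigenvalues i)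

namespace CSHelper

set_option linter.unusedSectionVars false

variable {n : Type*} [Fintype n] [DecidableEq n] {A : Matrix n n ℂ}

lemma contOn (A : Matrix n n ℂ) (f : ℝ → ℝ) : ContinuousOn f (spectrum ℝ A) :=
  (Matrix.finite_real_spectrum (A := A)).continuousOn f

lemma cfcMul (hA : A.IsHermitian) (f g : ℝ → ℝ) :
    hA.cfc f * hA.cfc g = hA.cfc (fun t => f t * g t) := by
  rw [← hA.cfc_eq, ← hA.cfc_eq, ← hA.cfc_eq,
    ← _root_.cfc_mul f g A (contOn A f) (contOn A g)]

lemma cfcSub (hA : A.IsHermitian) (f g : ℝ → ℝ) :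
    hA.cfc f - hA.cfc g = hA.cfc (fun t => f t - g t) := by
  rw [← hA.cfc_eq, ← hA.cfc_eq, ← hA.cfc_eq,
    ← _root_.cfc_sub f g A (contOn A f) (contOn A g)]

lemma cfcCongr (hA : A.IsHermitian) {f g : ℝ → ℝ}
    (h : ∀ i, f (hA.eigenvalues i) = g (hA.eigenvalues i)) : hA.cfc f = hA.cfc g := by
  have hfg : (RCLike.ofReal ∘ f ∘ hA.eigenvalues : n → ℂ) =
      RCLike.ofReal ∘ g ∘ hA.eigenvalues := by ext i; simp [h i]
  rw [Matrix.IsHermitian.cfc, Matrix.IsHermitian.cfc, hfg]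

lemma cfcId (hA : A.IsHermitian) : hA.cfc (fun t => t) = A := by
  rw [← hA.cfc_eq]; exact cfc_id ℝ A

lemma cfcOne (hA : A.IsHermitian) : hA.cfc (fun _ => 1) = 1 := by
  rw [← hA.cfc_eq]; exact cfc_one ℝ A

lemma cfcHerm (hA : A.IsHermitian) (f : ℝ → ℝ) : (hA.cfc f).IsHermitian := by
  rw [← hA.cfc_eq, Matrix.IsHermitian, ← Matrix.star_eq_conjTranspose]
  exact cfc_predicate f A

lemma cfcTrace (hA : A.IsHermitian) (f : ℝ → ℝ) :
    (hA.cfc f).trace = ∑ i, (f (hA.eigenvalues i) : ℂ) := by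
  have h1 : (star (hA.eigenvectorUnitary : Matrix n n ℂ)) *
      (hA.eigenvectorUnitary : Matrix n n ℂ) = 1 :=
    Unitary.star_mul_self_of_mem (SetLike.coe_mem _)
  rw [Matrix.IsHermitian.cfc, Unitary.conjStarAlgAut_apply, Matrix.trace_mul_comm, ← mul_assoc, h1, one_mul,
    Matrix.trace_diagonal]
  rfl

lemma cfcPosSemidef (hA : A.IsHermitian) {f : ℝ → ℝ}
    (h : ∀ i, 0 ≤ f (hA.eigenvalues i)) : (hA.cfc f).PosSemidef := by
  have hD : (Matrix.diagonal (RCLike.ofReal ∘ f ∘ hA.eigenvalues) : Matrix n n ℂ).PosSemidef := by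
    rw [Matrix.posSemidef_diagonal_iff]
    intro i
    simpa using Complex.zero_le_real.mpr (h i)
  rw [Matrix.IsHermitian.cfc, Unitary.conjStarAlgAut_apply, Matrix.star_eq_conjTranspose]
  exact hD.mul_mul_conjTranspose_same _

lemma psdTraceRe {X : Matrix n n ℂ} (hX : X.PosSemidef) : 0 ≤ X.trace.re := by
  have h1 : X.trace = ∑ i, (hX.1.eigenvalues i : ℂ) := by
    conv_lhs => rw [← cfcId hX.1]
    exact cfcTrace hX.1 _
  rw [h1]
  rw [Complex.re_sum]
  exact Finset.sum_nonneg fun i _ => by simpa using hX.eigenvalues_nonneg i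

def flat (A : Matrix n n ℂ) : EuclideanSpace ℂ (n × n) :=
  WithLp.toLp 2 (fun p : n × n => A p.2 p.1)

lemma trace_eq_inner (A B : Matrix n n ℂ) :
    (A.conjTranspose * B).trace = inner ℂ (flat A) (flat B) := by
  simp only [Matrix.trace, Matrix.diag, Matrix.mul_apply, Matrix.conjTranspose_apply,
    PiLp.inner_apply, RCLike.inner_apply, flat, PiLp.toLp_apply, Fintype.sum_prod_type]
  refine Finset.sum_congr rfl fun i _ => Finset.sum_congr rfl fun j _ => ?_
  rw [mul_comm]; rfl

lemma frob_eq_norm (A : Matrix n n ℂ) : frobNorm A = ‖flat A‖ := by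
  rw [frobNorm, ← Real.sqrt_sq (norm_nonneg (flat A)), ← @inner_self_eq_norm_sq ℂ,
    trace_eq_inner]
  rfl

lemma frobSq_nonneg (A : Matrix n n ℂ) : 0 ≤ ((A.conjTranspose * A).trace).re := by
  rw [trace_eq_inner]
  simpa using inner_self_nonneg (𝕜 := ℂ) (x := flat A)

lemma cs (A B : Matrix n n ℂ) :
    ((A.conjTranspose * B).trace).re ≤ frobNorm A * frobNorm B := by
  rw [trace_eq_inner, frob_eq_norm, frob_eq_norm]
  exact re_inner_le_norm (𝕜 := ℂ) (flat A) (flat B)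

lemma eqZeroOfMulVec {A : Matrix n n ℂ} (h : ∀ v, A.mulVec v = 0) : A = 0 := by
  ext i j
  have := congrFun (h (Pi.single j 1)) i
  simpa [Matrix.mulVec_single] using this

end CSHelper

/-- Matrix weighted Cauchy–Schwarz: for a Hermitian matrix `M` and a unit-trace positive
semidefinite weighting matrix `σ` with `supp M ⊆ supp σ`,
`‖M‖₁ ≤ ‖σ^{-1/4} M σ^{-1/4}‖₂`. -/
theorem stmt0 {d : ℕ} (M σ : Matrix (Fin d) (Fin d) ℂ)
    (hM : M.IsHermitian) (hσ : σ.PosSemidef) (hTr : σ.trace = 1)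
    (hsupp : ∀ v : Fin d → ℂ, σ.mulVec v = 0 → M.mulVec v = 0) :
    traceNorm M ≤ frobNorm (pinvPow σ (-(1/4 : ℝ)) * M * pinvPow σ (-(1/4 : ℝ))) := by
  open CSHelper in
  set g : ℝ → ℝ := fun t => if t = 0 then 0 else Real.rpow t (-(1/4 : ℝ)) with hg
  set s : ℝ → ℝ := fun t => if t = 0 then 0 else Real.rpow t (1/4 : ℝ) with hs
  set b : ℝ → ℝ := fun t => if t = 0 then 0 else Real.rpow t (1/2 : ℝ) with hb
  set χ : ℝ → ℝ := fun t => if t = 0 then 0 else 1 with hχ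
  set sgn : ℝ → ℝ := fun t => if t < 0 then -1 else if t = 0 then 0 else 1 with hsgn
  have hν : ∀ i, 0 ≤ hσ.1.eigenvalues i := hσ.eigenvalues_nonneg
  set T := hσ.1.cfc g with hTdef
  set S := hσ.1.cfc s with hSdef
  set B := hσ.1.cfc b with hBdef
  set Q := hσ.1.cfc χ with hQdef
  set P := hM.cfc sgn with hPdef
  have hpinv : pinvPow σ (-(1/4 : ℝ)) = T := by
    rw [pinvPow, matFun, dif_pos hσ.1]
  -- algebraic identities on σ's functional calculus
  have hST : S * T = Q := by
    rw [CSHelper.cfcMul]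
    apply CSHelper.cfcCongr
    intro i
    rcases eq_or_lt_of_le (hν i) with h0 | h0
    · simp [hs, hg, hχ, ← h0]
    · have h0' : hσ.1.eigenvalues i ≠ 0 := ne_of_gt h0
      simp only [hs, hg, hχ, if_neg h0']
      simp only [Real.rpow_eq_pow]; rw [← Real.rpow_add h0]
      norm_num
  have hTS : T * S = Q := by
    rw [CSHelper.cfcMul]
    apply CSHelper.cfcCongr
    intro i
    rcases eq_or_lt_of_le (hν i) with h0 | h0
    · simp [hs, hg, hχ, ← h0]
    · have h0' : hσ.1.eigenvalues i ≠ 0 := ne_of_gt h0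
      simp only [hs, hg, hχ, if_neg h0']
      simp only [Real.rpow_eq_pow]; rw [← Real.rpow_add h0]
      norm_num
  have hSS : S * S = B := by
    rw [CSHelper.cfcMul]
    apply CSHelper.cfcCongr
    intro i
    rcases eq_or_lt_of_le (hν i) with h0 | h0
    · simp [hs, hb, ← h0]
    · have h0' : hσ.1.eigenvalues i ≠ 0 := ne_of_gt h0
      simp only [hs, hb, if_neg h0']
      simp only [Real.rpow_eq_pow]; rw [← Real.rpow_add h0]
      norm_num
  have hBB : B * B = σ := by
    rw [CSHelper.cfcMul]
    conv_rhs => rw [show σ = hσ.1.cfc (fun t => t) from (CSHelper.cfcId hσ.1).symm]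
    apply CSHelper.cfcCongr
    intro i
    rcases eq_or_lt_of_le (hν i) with h0 | h0
    · simp [hb, ← h0]
    · have h0' : hσ.1.eigenvalues i ≠ 0 := ne_of_gt h0
      simp only [hb, if_neg h0']
      simp only [Real.rpow_eq_pow]; rw [← Real.rpow_add h0]
      norm_num
  have hσQ : σ * Q = σ := by
    conv_lhs => rw [show σ = hσ.1.cfc (fun t => t) from (CSHelper.cfcId hσ.1).symm]
    rw [CSHelper.cfcMul]
    conv_rhs => rw [show σ = hσ.1.cfc (fun t => t) from (CSHelper.cfcId hσ.1).symm]
    apply CSHelper.cfcCongr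
    intro i
    by_cases h0 : hσ.1.eigenvalues i = 0 <;> simp [hχ, h0]
  have hQherm : Q.IsHermitian := CSHelper.cfcHerm hσ.1 χ
  have hSherm : S.IsHermitian := CSHelper.cfcHerm hσ.1 s
  have hBherm : B.IsHermitian := CSHelper.cfcHerm hσ.1 b
  have hPherm : P.IsHermitian := CSHelper.cfcHerm hM sgn
  -- support: M * Q = M and Q * M = M
  have hMQ : M * Q = M := by
    have h0 : M * (1 - Q) = 0 := by
      apply CSHelper.eqZeroOfMulVec
      intro v
      rw [← Matrix.mulVec_mulVec]
      apply hsupp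
      rw [Matrix.mulVec_mulVec, mul_sub, mul_one, hσQ, sub_self, Matrix.zero_mulVec]
    rw [mul_sub, mul_one, sub_eq_zero] at h0
    exact h0.symm
  have hQM : Q * M = M := by
    have := congrArg Matrix.conjTranspose hMQ
    rwa [Matrix.conjTranspose_mul, hQherm.eq, hM.eq] at this
  -- factor M through N
  set N := T * M * T with hNdef
  have hMfac : S * N * S = M := by
    have h1 : S * N * S = (S * T) * M * (T * S) := by
      simp only [hNdef, mul_assoc]
    rw [h1, hST, hTS, hQM, hMQ]
  -- trace norm as sum of |eigenvalues|, and P * M = cfc |abs|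
  have hPM : P * M = hM.cfc (fun t => |t|) := by
    conv_lhs => rw [show M = hM.cfc (fun t => t) from (CSHelper.cfcId hM).symm]
    rw [CSHelper.cfcMul]
    apply CSHelper.cfcCongr
    intro i
    set t := hM.eigenvalues i
    rcases lt_trichotomy t 0 with ht | ht | ht
    · simp [hsgn, if_pos ht, abs_of_neg ht]
    · simp [hsgn, ht]
    · simp [hsgn, if_neg (not_lt.mpr (le_of_lt ht)), if_neg (ne_of_gt ht), abs_of_pos ht]
  have htn : traceNorm M = ((P * M).trace).re := by
    have hMM := (Matrix.posSemidef_conjTranspose_mul_self M).1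
    have e1 : traceNorm M = (hMM.cfc Real.sqrt).trace.re := by
      rw [traceNorm, Matrix.IsHermitian.cfc, Unitary.conjStarAlgAut_apply]; rfl
    have e2 : M.conjTranspose * M = cfc (fun t : ℝ => t * t) M := by
      rw [hM.cfc_eq, ← CSHelper.cfcMul, CSHelper.cfcId, hM.eq]
    have e3 : cfc Real.sqrt (M.conjTranspose * M) = cfc (fun t : ℝ => √(t * t)) M := by
      rw [e2]
      exact (cfc_comp' Real.sqrt (fun t : ℝ => t * t) M
        Real.continuous_sqrt.continuousOn (CSHelper.contOn M _) hM).symm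
    rw [e1, ← hMM.cfc_eq, e3, hM.cfc_eq, hPM,
      CSHelper.cfcCongr hM (g := fun t => |t|) fun i => Real.sqrt_mul_self_eq_abs _]
  -- the key trace identity : Tr(P M) = Tr((SPS)ᴴ N)
  have hkey : (P * M).trace = ((S * P * S).conjTranspose * N).trace := by
    have hSPS : (S * P * S).conjTranspose = S * P * S := by
      rw [Matrix.conjTranspose_mul, Matrix.conjTranspose_mul, hSherm.eq, hPherm.eq]
      simp [mul_assoc]
    rw [hSPS]
    conv_lhs => rw [← hMfac]
    rw [show P * (S * N * S) = (P * S * N) * S by simp only [mul_assoc],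
      Matrix.trace_mul_comm, show S * (P * S * N) = (S * P * S) * N by simp only [mul_assoc]]
  -- Cauchy–Schwarz
  have hCS : ((P * M).trace).re ≤ frobNorm (S * P * S) * frobNorm N := by
    rw [hkey]
    exact CSHelper.cs (S * P * S) N
  -- bound frobNorm (S * P * S) ≤ 1
  have hPP : P * P = hM.cfc χ := by
    rw [CSHelper.cfcMul]
    apply CSHelper.cfcCongr
    intro i
    set t := hM.eigenvalues i
    rcases lt_trichotomy t 0 with ht | ht | ht
    · simp [hsgn, hχ, if_pos ht, if_neg (ne_of_lt ht)]
    · simp [hsgn, hχ, ht]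
    · simp [hsgn, hχ, if_neg (not_lt.mpr (le_of_lt ht)), if_neg (ne_of_gt ht)]
  have hσPP : ((σ * (P * P)).trace).re ≤ 1 := by
    have hR : (1 : Matrix (Fin d) (Fin d) ℂ) - P * P = hM.cfc (fun t => 1 - χ t) := by
      rw [hPP, ← CSHelper.cfcSub hM, CSHelper.cfcOne]
    have hRpsd : ((1 : Matrix (Fin d) (Fin d) ℂ) - P * P).PosSemidef := by
      rw [hR]
      apply CSHelper.cfcPosSemidef
      intro i
      by_cases h0 : hM.eigenvalues i = 0 <;> simp [hχ, h0]
    have htrR : 0 ≤ ((σ * (1 - P * P)).trace).re := by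
      have h1 : (σ * (1 - P * P)).trace = (B * (1 - P * P) * B).trace := by
        conv_rhs => rw [Matrix.trace_mul_cycle]
        rw [hBB]
      rw [h1]
      apply CSHelper.psdTraceRe
      have := hRpsd.conjTranspose_mul_mul_same B
      rwa [hBherm.eq] at this
    have hexp : (σ * (1 - P * P)).trace = σ.trace - (σ * (P * P)).trace := by
      rw [mul_sub, mul_one, Matrix.trace_sub]
    rw [hexp, hTr] at htrR
    have : ((1 : ℂ) - (σ * (P * P)).trace).re = 1 - ((σ * (P * P)).trace).re := by
      simp [Complex.sub_re]
    rw [this] at htrR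
    linarith
  have hfrobSPS : frobNorm (S * P * S) ≤ 1 := by
    -- frobSq (SPS) = Re Tr((PB)(PB)) ≤ frobNorm(BP) * frobNorm(PB) = Re Tr(σ P²) ≤ 1
    have hSPS : (S * P * S).conjTranspose = S * P * S := by
      rw [Matrix.conjTranspose_mul, Matrix.conjTranspose_mul, hSherm.eq, hPherm.eq]
      simp [mul_assoc]
    have h1 : ((S * P * S).conjTranspose * (S * P * S)).trace = ((P * B) * (P * B)).trace := by
      rw [hSPS]
      rw [show (S * P * S) * (S * P * S) = S * (P * (S * S) * P * S) by simp only [mul_assoc],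
        Matrix.trace_mul_comm,
        show (P * (S * S) * P * S) * S = P * (S*S) * P * (S * S) by simp only [mul_assoc], hSS]
      simp only [mul_assoc]
    have hBPt : (B * P).conjTranspose = P * B := by
      rw [Matrix.conjTranspose_mul, hBherm.eq, hPherm.eq]
    have h2 : (((P * B) * (P * B)).trace).re ≤ frobNorm (B * P) * frobNorm (P * B) := by
      have := CSHelper.cs (B * P) (P * B)
      rwa [hBPt] at this
    have hσPPtr : ((B * P).conjTranspose * (B * P)).trace = (σ * (P * P)).trace := by
      rw [hBPt,
        show (P * B) * (B * P) = P * ((B * B) * P) by simp only [mul_assoc], hBB,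
        Matrix.trace_mul_comm]
      simp only [mul_assoc]
    have hPBtr : ((P * B).conjTranspose * (P * B)).trace = (σ * (P * P)).trace := by
      rw [Matrix.conjTranspose_mul, hBherm.eq, hPherm.eq,
        show (B * P) * (P * B) = B * ((P * P) * B) by simp only [mul_assoc],
        Matrix.trace_mul_comm, Matrix.trace_mul_comm σ,
        show (P * P) * B * B = (P * P) * (B * B) by simp only [mul_assoc], hBB]
    have hfBP : frobNorm (B * P) = Real.sqrt (((σ * (P * P)).trace).re) := by
      rw [frobNorm, hσPPtr]
    have hfPB : frobNorm (P * B) = Real.sqrt (((σ * (P * P)).trace).re) := by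
      rw [frobNorm, hPBtr]
    have hnn : 0 ≤ ((σ * (P * P)).trace).re := by
      rw [← hσPPtr]
      exact CSHelper.frobSq_nonneg (B * P)
    have h3 : (((S * P * S).conjTranspose * (S * P * S)).trace).re ≤ 1 := by
      rw [h1]
      calc (((P * B) * (P * B)).trace).re ≤ frobNorm (B * P) * frobNorm (P * B) := h2
        _ = ((σ * (P * P)).trace).re := by
            rw [hfBP, hfPB, Real.mul_self_sqrt hnn]
        _ ≤ 1 := hσPP
    rw [frobNorm]
    calc Real.sqrt (((S * P * S).conjTranspose * (S * P * S)).trace).re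
        ≤ Real.sqrt 1 := Real.sqrt_le_sqrt h3
      _ = 1 := Real.sqrt_one
  -- put everything together
  rw [hpinv, htn]
  calc ((P * M).trace).re ≤ frobNorm (S * P * S) * frobNorm N := hCS
    _ ≤ 1 * frobNorm N := by
        apply mul_le_mul_of_nonneg_right hfrobSPS
        rw [frobNorm]; exact Real.sqrt_nonneg _
    _ = frobNorm N := one_mul _
end

section
/- McDiarmid's inequality (method of bounded differences): if f: X₁ × ⋯ × X_k → ℝ satisfies the bounded differences property with constants c₁, …, c_k, and x₁, …, x_k are independent with distributions q^{X_i}, then Pr[f(x₁,…,x_k) ≥ E[f] + δ] ≤ exp(−2δ²/(c₁² + ⋯ + c_k²)) for all δ > 0. -/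
open scoped BigOperators


lemma hoeff_g_pos (p : ℝ) (hp0 : 0 ≤ p) (hp1 : p ≤ 1) (x : ℝ) :
    0 < (1 - p) + p * Real.exp x := by
  rcases eq_or_lt_of_le hp0 with h0 | h0
  · simp [← h0]
  · nlinarith [Real.exp_pos x, mul_pos h0 (Real.exp_pos x)]

lemma quarter_aux (a b : ℝ) : b * a - b * b ≤ 1 / 4 * a ^ 2 := by
  nlinarith [sq_nonneg (a - 2 * b)]

lemma hoeff_core (p : ℝ) (hp0 : 0 ≤ p) (hp1 : p ≤ 1) (h : ℝ) :
    Real.exp (-p * h) * ((1 - p) + p * Real.exp h) ≤ Real.exp (h ^ 2 / 8) := by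
  set g : ℝ → ℝ := fun x => (1 - p) + p * Real.exp x with hg
  have hgpos : ∀ x, 0 < g x := hoeff_g_pos p hp0 hp1
  have hgne : ∀ x, g x ≠ 0 := fun x => (hgpos x).ne'
  have hgd : ∀ x, HasDerivAt g (p * Real.exp x) x := by
    intro x
    exact ((Real.hasDerivAt_exp x).const_mul p).const_add (1 - p)
  set F : ℝ → ℝ := fun x => x ^ 2 / 8 + p * x - Real.log (g x) with hF
  set F' : ℝ → ℝ := fun x => x / 4 + p - p * Real.exp x / g x with hF'
  have hFd : ∀ x, HasDerivAt F (F' x) x := by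
    intro x
    have h1 : HasDerivAt (fun x : ℝ => x ^ 2 / 8 + p * x) (x / 4 + p) x := by
      have := ((hasDerivAt_pow 2 x).div_const 8).add ((hasDerivAt_id x).const_mul p)
      exact this.congr_deriv (by ring)
    have h2 : HasDerivAt (fun x => Real.log (g x)) (p * Real.exp x / g x) x :=
      (hgd x).log (hgne x)
    exact h1.sub h2
  have hF'd : ∀ x, HasDerivAt F'
      (1 / 4 - (p * Real.exp x * g x - p * Real.exp x * (p * Real.exp x)) / (g x) ^ 2) x := by
    intro x
    have h1 : HasDerivAt (fun x : ℝ => x / 4 + p) (1 / 4) x := by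
      simpa using (hasDerivAt_id x).div_const 4 |>.add_const p
    have h2 : HasDerivAt (fun x => p * Real.exp x / g x)
        ((p * Real.exp x * g x - p * Real.exp x * (p * Real.exp x)) / (g x) ^ 2) x :=
      (((Real.hasDerivAt_exp x).const_mul p).div (hgd x) (hgne x))
    exact h1.sub h2
  have hF'' : ∀ x, 0 ≤ 1 / 4 - (p * Real.exp x * g x - p * Real.exp x * (p * Real.exp x)) / (g x) ^ 2 := by
    intro x
    rw [sub_nonneg, div_le_iff₀ (pow_pos (hgpos x) 2)]
    have := quarter_aux (g x) (p * Real.exp x)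
    linarith
  have hF'mono : Monotone F' := by
    apply monotone_of_deriv_nonneg
    · exact fun x => (hF'd x).differentiableAt
    · intro x; rw [(hF'd x).deriv]; exact hF'' x
  have hF'0 : F' 0 = 0 := by simp [hF', hg]
  have hF0 : F 0 = 0 := by simp [hF, hg]
  have key : ∀ x, 0 ≤ F x := by
    intro x
    rcases le_total 0 x with hx | hx
    · have : MonotoneOn F (Set.Ici 0) := by
        apply monotoneOn_of_deriv_nonneg (convex_Ici 0)
        · exact (fun x _ => (hFd x).differentiableAt.continuousAt.continuousWithinAt)
        · exact fun x _ => (hFd x).differentiableAt.differentiableWithinAt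
        · intro y hy
          rw [(hFd y).deriv]
          rw [← hF'0]
          exact hF'mono (le_of_lt (by simpa using hy))
      have := this (Set.self_mem_Ici) (by exact hx) hx
      rwa [hF0] at this
    · have : AntitoneOn F (Set.Iic 0) := by
        apply antitoneOn_of_deriv_nonpos (convex_Iic 0)
        · exact (fun x _ => (hFd x).differentiableAt.continuousAt.continuousWithinAt)
        · exact fun x _ => (hFd x).differentiableAt.differentiableWithinAt
        · intro y hy
          rw [(hFd y).deriv, ← hF'0]
          exact hF'mono (le_of_lt (by simpa using hy))
      have := this (by exact hx) (Set.self_mem_Iic) hx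
      rwa [hF0] at this
  have hFh := key h
  have : Real.log (g h) ≤ h ^ 2 / 8 + p * h := by
    have : 0 ≤ h ^ 2 / 8 + p * h - Real.log (g h) := hFh
    linarith
  calc Real.exp (-p * h) * g h
      = Real.exp (-p * h) * Real.exp (Real.log (g h)) := by rw [Real.exp_log (hgpos h)]
    _ = Real.exp (-p * h + Real.log (g h)) := by rw [← Real.exp_add]
    _ ≤ Real.exp (h ^ 2 / 8) := by
        apply Real.exp_le_exp.2; linarith

lemma hoeff_sum {α : Type*} [Fintype α] [Nonempty α] (w : α → ℝ)
    (hw0 : ∀ a, 0 ≤ w a) (hw1 : ∑ a, w a = 1) (g : α → ℝ)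
    (hmean : ∑ a, w a * g a = 0) (c : ℝ) (hc : 0 ≤ c)
    (hbd : ∀ a b, |g a - g b| ≤ c) (t : ℝ) :
    ∑ a, w a * Real.exp (t * g a) ≤ Real.exp (t ^ 2 * c ^ 2 / 8) := by
  obtain ⟨a₀, -, hA⟩ := Finset.exists_min_image Finset.univ g Finset.univ_nonempty
  obtain ⟨b₀, -, hB⟩ := Finset.exists_max_image Finset.univ g Finset.univ_nonempty
  set A := g a₀ with hAdef
  set B := g b₀ with hBdef
  have hA' : ∀ a, A ≤ g a := fun a => hA a (Finset.mem_univ a)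
  have hB' : ∀ a, g a ≤ B := fun a => hB a (Finset.mem_univ a)
  have hAB : A ≤ B := hA' b₀
  have hBAc : B - A ≤ c := by
    have := hbd b₀ a₀
    rw [abs_le] at this
    linarith [this.2]
  have hA0 : A ≤ 0 := by
    have h1 : ∑ a, w a * A ≤ ∑ a, w a * g a :=
      Finset.sum_le_sum fun a _ => mul_le_mul_of_nonneg_left (hA' a) (hw0 a)
    rw [hmean, ← Finset.sum_mul, hw1, one_mul] at h1
    exact h1
  have hB0 : 0 ≤ B := by
    have h1 : ∑ a, w a * g a ≤ ∑ a, w a * B :=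
      Finset.sum_le_sum fun a _ => mul_le_mul_of_nonneg_left (hB' a) (hw0 a)
    rw [hmean, ← Finset.sum_mul, hw1, one_mul] at h1
    exact h1
  rcases eq_or_lt_of_le hAB with hEQ | hAB'
  · -- A = B, so g ≡ 0
    have hg0 : ∀ a, g a = 0 := by
      intro a
      have h1 := hA' a
      have h2 := hB' a
      rw [← hEQ] at h2
      linarith
    simp only [hg0, mul_zero, Real.exp_zero, mul_one, hw1]
    exact Real.one_le_exp (by positivity)
  · set p : ℝ := -A / (B - A) with hp
    have hBA : 0 < B - A := by linarith
    have hp0 : 0 ≤ p := by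
      apply div_nonneg (by linarith) hBA.le
    have hp1 : p ≤ 1 := by
      rw [div_le_one hBA]; linarith
    set h : ℝ := t * (B - A) with hh
    -- convexity bound
    have conv : ∀ a, Real.exp (t * g a) ≤
        (B - g a) / (B - A) * Real.exp (t * A) + (g a - A) / (B - A) * Real.exp (t * B) := by
      intro a
      have hθ0 : (0:ℝ) ≤ (B - g a) / (B - A) := div_nonneg (by linarith [hB' a]) hBA.le
      have hθ0' : (0:ℝ) ≤ (g a - A) / (B - A) := div_nonneg (by linarith [hA' a]) hBA.le
      have hθsum : (B - g a) / (B - A) + (g a - A) / (B - A) = 1 := by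
        field_simp; ring
      have := convexOn_exp.2 (Set.mem_univ (t * A)) (Set.mem_univ (t * B)) hθ0 hθ0' hθsum
      simp only [smul_eq_mul] at this
      have harg : (B - g a) / (B - A) * (t * A) + (g a - A) / (B - A) * (t * B) = t * g a := by
        field_simp; ring
      rwa [harg] at this
    have step1 : ∑ a, w a * Real.exp (t * g a) ≤
        (1 - p) * Real.exp (t * A) + p * Real.exp (t * B) := by
      have := Finset.sum_le_sum (fun a (_ : a ∈ Finset.univ) =>
        mul_le_mul_of_nonneg_left (conv a) (hw0 a))
      refine this.trans_eq ?_
      have e1 : ∑ a, w a * ((B - g a) / (B - A) * Real.exp (t * A)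
            + (g a - A) / (B - A) * Real.exp (t * B))
          = (∑ a, w a * (B - g a)) / (B - A) * Real.exp (t * A)
            + (∑ a, w a * (g a - A)) / (B - A) * Real.exp (t * B) := by
        rw [Finset.sum_div, Finset.sum_div, Finset.sum_mul, Finset.sum_mul, ← Finset.sum_add_distrib]
        congr 1; ext a; ring
      rw [e1]
      have e2 : ∑ a, w a * (B - g a) = B := by
        simp only [mul_sub]
        rw [Finset.sum_sub_distrib, ← Finset.sum_mul, hw1, hmean]; ring
      have e3 : ∑ a, w a * (g a - A) = -A := by
        simp only [mul_sub]
        rw [Finset.sum_sub_distrib, ← Finset.sum_mul, hw1, hmean]; ring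
      rw [e2, e3]
      congr 2
      rw [hp]; field_simp; ring
    have hta : t * A = -p * h := by rw [hp, hh]; field_simp
    have htb : t * B = -p * h + h := by rw [hp, hh]; field_simp; ring
    have step2 : (1 - p) * Real.exp (t * A) + p * Real.exp (t * B)
        = Real.exp (-p * h) * ((1 - p) + p * Real.exp h) := by
      rw [hta, htb, Real.exp_add]; ring
    have step3 := hoeff_core p hp0 hp1 h
    have step4 : Real.exp (h ^ 2 / 8) ≤ Real.exp (t ^ 2 * c ^ 2 / 8) := by
      apply Real.exp_le_exp.2
      rw [hh]
      have : (t * (B - A)) ^ 2 ≤ t ^ 2 * c ^ 2 := by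
        rw [mul_pow]
        exact mul_le_mul_of_nonneg_left (pow_le_pow_left₀ hBA.le hBAc 2) (sq_nonneg t)
      linarith
    calc ∑ a, w a * Real.exp (t * g a)
        ≤ (1 - p) * Real.exp (t * A) + p * Real.exp (t * B) := step1
      _ = Real.exp (-p * h) * ((1 - p) + p * Real.exp h) := step2
      _ ≤ Real.exp (h ^ 2 / 8) := step3
      _ ≤ Real.exp (t ^ 2 * c ^ 2 / 8) := step4

universe u

lemma sum_prod_one {n : ℕ} (Y : Fin n → Type u) [∀ i, Fintype (Y i)]
    (q : ∀ i, Y i → ℝ) (hq1 : ∀ i, ∑ y, q i y = 1) :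
    ∑ x : ∀ i, Y i, ∏ i, q i (x i) = 1 := by
  rw [← Fintype.piFinset_univ, ← Finset.prod_univ_sum]
  simp [hq1]

lemma mgf_bound (k : ℕ) : ∀ (X : Fin k → Type u) [∀ i, Fintype (X i)] [∀ i, Nonempty (X i)]
    (f : (∀ i, X i) → ℝ) (c : Fin k → ℝ) (_hc : ∀ i, 0 ≤ c i)
    (_hbd : ∀ (x : ∀ i, X i) (i : Fin k) (x' : X i), |f x - f (Function.update x i x')| ≤ c i)
    (q : ∀ i, X i → ℝ) (_hq0 : ∀ i xi, 0 ≤ q i xi) (_hq1 : ∀ i, ∑ xi, q i xi = 1) (t : ℝ),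
    ∑ x : ∀ i, X i, (∏ i, q i (x i)) *
      Real.exp (t * (f x - ∑ z : ∀ i, X i, (∏ i, q i (z i)) * f z))
      ≤ Real.exp (t ^ 2 * (∑ i, (c i) ^ 2) / 8) := by
  induction k with
  | zero =>
    intro X _ _ f c hc hbd q hq0 hq1 t
    simp only [Fintype.sum_unique, Finset.univ_eq_empty, Finset.prod_empty, Finset.sum_empty,
      one_mul]
    rw [show f default - f default = 0 by ring]
    simp
  | succ n ih =>
    intro X _ _ f c hc hbd q hq0 hq1 t
    -- decomposition of sums over the pi type
    have sum_decomp : ∀ F : (∀ i : Fin (n+1), X i) → ℝ,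
        ∑ x : ∀ i, X i, F x
          = ∑ x0 : X 0, ∑ xr : ∀ i : Fin n, X i.succ, F (Fin.cons x0 xr) := by
      intro F
      rw [← (Fin.consEquiv X).sum_comp F, Fintype.sum_prod_type]
      rfl
    have wsplit : ∀ (x0 : X 0) (xr : ∀ i : Fin n, X i.succ),
        (∏ i, q i (Fin.cons x0 xr i)) = q 0 x0 * ∏ i : Fin n, q i.succ (xr i) := by
      intro x0 xr
      rw [Fin.prod_univ_succ]
      simp
    set Y : Fin n → Type u := fun i => X i.succ with hY
    set qr : ∀ i, Y i → ℝ := fun i y => q i.succ y with hqr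
    set w : (∀ i, Y i) → ℝ := fun xr => ∏ i, qr i (xr i) with hw
    have hw0 : ∀ xr, 0 ≤ w xr := fun xr =>
      Finset.prod_nonneg fun i _ => hq0 i.succ (xr i)
    have hwsum : ∑ xr : ∀ i, Y i, w xr = 1 :=
      sum_prod_one Y qr (fun i => hq1 i.succ)
    set h : X 0 → ℝ := fun x0 =>
      ∑ z : ∀ i, Y i, (∏ i, qr i (z i)) * f (Fin.cons x0 z) with hh
    set μ : ℝ := ∑ z : ∀ i, X i, (∏ i, q i (z i)) * f z with hμdef
    have hμ : μ = ∑ x0 : X 0, q 0 x0 * h x0 := by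
      rw [hμdef, sum_decomp (fun z => (∏ i, q i (z i)) * f z)]
      apply Finset.sum_congr rfl
      intro x0 _
      rw [hh, Finset.mul_sum]
      apply Finset.sum_congr rfl
      intro xr _
      rw [wsplit x0 xr]
      ring
    -- bounded differences of h
    have hhbd : ∀ a b : X 0, |h a - h b| ≤ c 0 := by
      intro a b
      have e : h a - h b = ∑ xr : ∀ i, Y i, w xr * (f (Fin.cons a xr) - f (Fin.cons b xr)) := by
        rw [hh]
        rw [← Finset.sum_sub_distrib]
        apply Finset.sum_congr rfl
        intro xr _
        rw [hw]; ring
      rw [e]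
      calc |∑ xr : ∀ i, Y i, w xr * (f (Fin.cons a xr) - f (Fin.cons b xr))|
          ≤ ∑ xr : ∀ i, Y i, |w xr * (f (Fin.cons a xr) - f (Fin.cons b xr))| :=
            Finset.abs_sum_le_sum_abs _ _
        _ ≤ ∑ xr : ∀ i, Y i, w xr * c 0 := by
            apply Finset.sum_le_sum
            intro xr _
            rw [abs_mul, abs_of_nonneg (hw0 xr)]
            apply mul_le_mul_of_nonneg_left _ (hw0 xr)
            have : Fin.cons b xr = Function.update (Fin.cons a xr) 0 b := by
              rw [Fin.update_cons_zero]
            rw [this]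
            exact hbd (Fin.cons a xr) 0 b
        _ = c 0 := by rw [← Finset.sum_mul, hwsum, one_mul]
    -- inner bound from the induction hypothesis
    have inner_bd : ∀ x0 : X 0,
        ∑ xr : ∀ i, Y i, w xr * Real.exp (t * (f (Fin.cons x0 xr) - h x0))
          ≤ Real.exp (t ^ 2 * (∑ i : Fin n, (c i.succ) ^ 2) / 8) := by
      intro x0
      have := ih Y (fun xr => f (Fin.cons x0 xr)) (fun i => c i.succ)
        (fun i => hc i.succ)
        (by
          intro xr i x'
          show |f (Fin.cons x0 xr) - f (Fin.cons x0 (Function.update xr i x'))| ≤ c i.succ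
          rw [Fin.cons_update]
          exact hbd (Fin.cons x0 xr) i.succ x')
        qr (fun i y => hq0 i.succ y) (fun i => hq1 i.succ) t
      exact this
    -- rewrite LHS
    have lhs_eq : ∑ x : ∀ i, X i, (∏ i, q i (x i)) * Real.exp (t * (f x - μ))
        = ∑ x0 : X 0, q 0 x0 * Real.exp (t * (h x0 - μ)) *
            ∑ xr : ∀ i, Y i, w xr * Real.exp (t * (f (Fin.cons x0 xr) - h x0)) := by
      rw [sum_decomp (fun x => (∏ i, q i (x i)) * Real.exp (t * (f x - μ)))]
      apply Finset.sum_congr rfl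
      intro x0 _
      rw [Finset.mul_sum]
      apply Finset.sum_congr rfl
      intro xr _
      rw [wsplit x0 xr]
      have : Real.exp (t * (f (Fin.cons x0 xr) - μ))
          = Real.exp (t * (h x0 - μ)) * Real.exp (t * (f (Fin.cons x0 xr) - h x0)) := by
        rw [← Real.exp_add]
        congr 1
        ring
      rw [this]
      ring
    have outer_bd : ∑ x0 : X 0, q 0 x0 * Real.exp (t * (h x0 - μ))
        ≤ Real.exp (t ^ 2 * (c 0) ^ 2 / 8) := by
      have hmean : ∑ x0 : X 0, q 0 x0 * (h x0 - μ) = 0 := by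
        simp only [mul_sub]
        rw [Finset.sum_sub_distrib, ← hμ, ← Finset.sum_mul, hq1 0]
        ring
      have := hoeff_sum (q 0) (hq0 0) (hq1 0) (fun x0 => h x0 - μ) hmean (c 0) (hc 0)
        (fun a b => by simpa using hhbd a b) t
      exact this
    calc ∑ x : ∀ i, X i, (∏ i, q i (x i)) * Real.exp (t * (f x - μ))
        = ∑ x0 : X 0, q 0 x0 * Real.exp (t * (h x0 - μ)) *
            ∑ xr : ∀ i, Y i, w xr * Real.exp (t * (f (Fin.cons x0 xr) - h x0)) := lhs_eq
      _ ≤ ∑ x0 : X 0, q 0 x0 * Real.exp (t * (h x0 - μ)) *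
            Real.exp (t ^ 2 * (∑ i : Fin n, (c i.succ) ^ 2) / 8) := by
          apply Finset.sum_le_sum
          intro x0 _
          exact mul_le_mul_of_nonneg_left (inner_bd x0)
            (mul_nonneg (hq0 0 x0) (Real.exp_pos _).le)
      _ = Real.exp (t ^ 2 * (∑ i : Fin n, (c i.succ) ^ 2) / 8) *
            ∑ x0 : X 0, q 0 x0 * Real.exp (t * (h x0 - μ)) := by
          rw [← Finset.sum_mul, mul_comm]
      _ ≤ Real.exp (t ^ 2 * (∑ i : Fin n, (c i.succ) ^ 2) / 8) *
            Real.exp (t ^ 2 * (c 0) ^ 2 / 8) := by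
          exact mul_le_mul_of_nonneg_left outer_bd (Real.exp_pos _).le
      _ = Real.exp (t ^ 2 * (∑ i : Fin (n+1), (c i) ^ 2) / 8) := by
          rw [← Real.exp_add, Fin.sum_univ_succ]
          congr 1
          ring

/-- McDiarmid's inequality (method of bounded differences): if `f` satisfies the bounded
differences property with constants `c i`, and the coordinates are drawn independently from
distributions `q i`, then the probability that `f` exceeds its expectation by `δ` is at most
`exp (-2 δ² / ∑ i, (c i)²)`. -/
theorem stmt2 {k : ℕ} (X : Fin k → Type*) [∀ i, Fintype (X i)] [∀ i, Nonempty (X i)]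
    (f : (∀ i, X i) → ℝ) (c : Fin k → ℝ) (hc : ∀ i, 0 < c i)
    (hbd : ∀ (x : ∀ i, X i) (i : Fin k) (x' : X i),
      |f x - f (Function.update x i x')| ≤ c i)
    (q : ∀ i, X i → ℝ) (hq0 : ∀ i xi, 0 ≤ q i xi) (hq1 : ∀ i, ∑ xi, q i xi = 1)
    (δ : ℝ) (hδ : 0 < δ) :
    ∑ x : ∀ i, X i,
        Set.indicator
          {y : ∀ i, X i | (∑ z : ∀ i, X i, (∏ i, q i (z i)) * f z) + δ ≤ f y}
          (fun y => ∏ i, q i (y i)) x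
      ≤ Real.exp (-2 * δ ^ 2 / ∑ i, (c i) ^ 2) := by
  classical
  set μ : ℝ := ∑ z : ∀ i, X i, (∏ i, q i (z i)) * f z with hμ
  set S : ℝ := ∑ i, (c i) ^ 2 with hS
  rcases Nat.eq_zero_or_pos k with hk | hk
  · subst hk
    have hμ0 : μ = f default := by
      rw [hμ, Fintype.sum_unique]
      simp
    rw [Fintype.sum_unique]
    rw [Set.indicator_of_notMem (by
      simp only [Set.mem_setOf_eq, not_le]
      have : f (default : ∀ i : Fin 0, X i) = μ := hμ0.symm
      linarith)]
    positivity
  · have : Nonempty (Fin k) := Fin.pos_iff_nonempty.mp hk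
    have hSpos : 0 < S := Finset.sum_pos (fun i _ => pow_pos (hc i) 2) Finset.univ_nonempty
    set t : ℝ := 4 * δ / S with hT
    have ht : 0 < t := by positivity
    have key := mgf_bound k X f c (fun i => (hc i).le) hbd q hq0 hq1 t
    have pointwise : ∀ x : ∀ i, X i,
        Set.indicator {y : ∀ i, X i | μ + δ ≤ f y} (fun y => ∏ i, q i (y i)) x
          ≤ (∏ i, q i (x i)) * Real.exp (t * (f x - μ)) * Real.exp (-(t * δ)) := by
      intro x
      by_cases hx : μ + δ ≤ f x
      · rw [Set.indicator_of_mem (by exact hx)]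
        have h1 : (1 : ℝ) ≤ Real.exp (t * (f x - μ)) * Real.exp (-(t * δ)) := by
          rw [← Real.exp_add]
          apply Real.one_le_exp
          have : 0 ≤ t * (f x - μ - δ) := mul_nonneg ht.le (by linarith)
          nlinarith
        have h0 : 0 ≤ ∏ i, q i (x i) := Finset.prod_nonneg fun i _ => hq0 i (x i)
        calc (∏ i, q i (x i)) = (∏ i, q i (x i)) * 1 := by ring
          _ ≤ (∏ i, q i (x i)) * (Real.exp (t * (f x - μ)) * Real.exp (-(t * δ))) :=
              mul_le_mul_of_nonneg_left h1 h0
          _ = (∏ i, q i (x i)) * Real.exp (t * (f x - μ)) * Real.exp (-(t * δ)) := by ring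
      · have hx' : x ∉ {y : ∀ i, X i | μ + δ ≤ f y} := hx
        rw [Set.indicator_of_notMem hx']
        exact mul_nonneg (mul_nonneg (Finset.prod_nonneg fun i _ => hq0 i (x i))
          (Real.exp_pos _).le) (Real.exp_pos _).le
    calc ∑ x : ∀ i, X i,
          Set.indicator {y : ∀ i, X i | μ + δ ≤ f y} (fun y => ∏ i, q i (y i)) x
        ≤ ∑ x : ∀ i, X i,
            (∏ i, q i (x i)) * Real.exp (t * (f x - μ)) * Real.exp (-(t * δ)) :=
          Finset.sum_le_sum fun x _ => pointwise x
      _ = (∑ x : ∀ i, X i, (∏ i, q i (x i)) * Real.exp (t * (f x - μ))) * Real.exp (-(t * δ)) := by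
          rw [← Finset.sum_mul]
      _ ≤ Real.exp (t ^ 2 * S / 8) * Real.exp (-(t * δ)) :=
          mul_le_mul_of_nonneg_right key (Real.exp_pos _).le
      _ = Real.exp (t ^ 2 * S / 8 - t * δ) := by rw [← Real.exp_add]; ring_nf
      _ = Real.exp (-2 * δ ^ 2 / S) := by
          congr 1
          rw [hT]
          field_simp
          ring
end
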